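/- Monotonicity of solvable start states in the chain: In the chain system with parameter D, if a deterministic goal-conditioned policy π, executed toward goal s_D, reaches s_D from s_i (for some 0 ≤ i ≤ D), then π executed toward goal s_D reaches s_D from s_j for every j with i ≤ j ≤ D. -/

import Mathlib

/-- The transition function of the chain system with parameter `D`: states are
`s_0, …, s_D, s_{D+1}`; for `i ≤ D`, action `true` moves `s_i` to `s_{i+1}` and
action `false` moves to the absorbing sink `s_{D+1}`. -/
def chainStep (D : ℕ) (i : Fin (D + 2)) (a : Bool) : Fin (D + 2) :=
  if h : (i : ℕ) ≤ D ∧ a = true then ⟨(i : ℕ) + 1, by omega⟩ else ⟨D + 1, by omega⟩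

/-- The state reached after `n` steps of executing the deterministic
goal-conditioned policy `π` from state `s` toward goal `g`. -/
def polIter {S A : Type*} (t : S → A → S) (π : S → S → A) (g s : S) : ℕ → S
  | 0 => s
  | n + 1 => t (polIter t π g s n) (π (polIter t π g s n) g)

/-- The policy `π` reaches goal `g` from state `s`: the rollout of `π` from `s`
toward `g` visits `g` at some step. -/
def polReaches {S A : Type*} (t : S → A → S) (π : S → S → A) (s g : S) : Prop :=
  ∃ n : ℕ, polIter t π g s n = g

lemma polIter_add {S A : Type*} (t : S → A → S) (π : S → S → A) (g s : S)
    (a b : ℕ) : polIter t π g s (a + b) = polIter t π g (polIter t π g s a) b := by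
  induction b with
  | zero => rfl
  | succ b ih => simp [polIter, ← Nat.add_assoc, ih]

lemma chainStep_sink (D : ℕ) (a : Bool) :
    chainStep D ⟨D + 1, by omega⟩ a = ⟨D + 1, by omega⟩ :=
  dif_neg (by simp)

lemma sink_absorb (D : ℕ) (π : Fin (D + 2) → Fin (D + 2) → Bool)
    (g s : Fin (D + 2)) (m : ℕ) (hm : polIter (chainStep D) π g s m = ⟨D + 1, by omega⟩) :
    ∀ p, m ≤ p → polIter (chainStep D) π g s p = ⟨D + 1, by omega⟩ := by
  intro p hp
  obtain ⟨q, rfl⟩ := Nat.exists_eq_add_of_le hp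
  induction q with
  | zero => exact hm
  | succ q ih =>
    have h1 : polIter (chainStep D) π g s (m + (q + 1))
        = chainStep D (polIter (chainStep D) π g s (m + q))
            (π (polIter (chainStep D) π g s (m + q)) g) := by
      simp [← Nat.add_assoc, polIter]
    have h2 := ih (by omega)
    rw [h2] at h1
    exact h1.trans (chainStep_sink D _)

/-- Along a successful rollout, step `k` is exactly `s_{i+k}`. -/
lemma chain_rollout (D : ℕ) (π : Fin (D + 2) → Fin (D + 2) → Bool) (i : ℕ) (hi : i ≤ D)
    (n : ℕ) (hn : polIter (chainStep D) π ⟨D, by linarith⟩ ⟨i, by linarith⟩ n = ⟨D, by linarith⟩) :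
    ∀ k ≤ n, ∃ hk : i + k ≤ D,
      polIter (chainStep D) π ⟨D, by linarith⟩ ⟨i, by linarith⟩ k = ⟨i + k, by linarith⟩ := by
  intro k hk
  induction k with
  | zero => exact ⟨by omega, rfl⟩
  | succ k ih =>
    obtain ⟨hik, hval⟩ := ih (by linarith)
    have hstep : polIter (chainStep D) π ⟨D, by linarith⟩ ⟨i, by linarith⟩ (k + 1)
        = chainStep D ⟨i + k, by linarith⟩ (π ⟨i + k, by linarith⟩ ⟨D, by linarith⟩) := by
      simp [polIter, hval]
    by_cases hc : i + k ≤ D ∧ π ⟨i + k, by linarith⟩ ⟨D, by linarith⟩ = true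
    · have hact : chainStep D ⟨i + k, by clear * - hik; linarith⟩
          (π ⟨i + k, by clear * - hik; linarith⟩ ⟨D, by clear * - hik; linarith⟩)
          = ⟨i + k + 1, by clear * - hik; linarith⟩ := by
        rw [hc.2]; exact dif_pos ⟨hc.1, rfl⟩
      have hv : polIter (chainStep D) π ⟨D, by clear * - hik; linarith⟩
          ⟨i, by clear * - hi; linarith⟩ (k + 1)
          = ⟨i + k + 1, by clear * - hik; linarith⟩ := hstep.trans hact
      have hle : i + (k + 1) ≤ D := by
        by_contra hgt
        have heq : i + k + 1 = D + 1 := by omega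
        have hsink : polIter (chainStep D) π ⟨D, by linarith⟩ ⟨i, by linarith⟩ (k + 1)
            = ⟨D + 1, by linarith⟩ := hv.trans (Fin.ext heq)
        have hD1 := sink_absorb D π _ _ _ hsink n hk
        have : (⟨D, by linarith⟩ : Fin (D + 2)) = ⟨D + 1, by linarith⟩ := hn.symm.trans hD1
        rw [Fin.mk.injEq] at this
        omega
      exact ⟨hle, hv.trans (Fin.ext (by simp; omega))⟩
    · exfalso
      have hsink : polIter (chainStep D) π ⟨D, by linarith⟩ ⟨i, by linarith⟩ (k + 1)
          = ⟨D + 1, by linarith⟩ :=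
        hstep.trans (dif_neg fun hcon => hc ⟨hcon.1, hcon.2⟩)
      have hD1 := sink_absorb D π _ _ _ hsink n hk
      have : (⟨D, by linarith⟩ : Fin (D + 2)) = ⟨D + 1, by linarith⟩ := hn.symm.trans hD1
      rw [Fin.mk.injEq] at this
      omega

/-- Monotonicity of solvable start states in the chain: if a deterministic
goal-conditioned policy `π`, executed toward goal `s_D`, reaches `s_D` from `s_i`
(`i ≤ D`), then it reaches `s_D` from `s_j` for every `i ≤ j ≤ D`. -/
theorem chain_solvable_mono (D : ℕ) (hD : 1 ≤ D)
    (π : Fin (D + 2) → Fin (D + 2) → Bool) (i : ℕ) (hi : i ≤ D)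
    (h : polReaches (chainStep D) π ⟨i, by omega⟩ ⟨D, by omega⟩) :
    ∀ j : ℕ, (hj1 : i ≤ j) → (hj2 : j ≤ D) →
      polReaches (chainStep D) π ⟨j, by omega⟩ ⟨D, by omega⟩ := by
  intro j hj1 hj2
  obtain ⟨n, hn⟩ := h
  have hin : i + n = D := by
    obtain ⟨hk, hval⟩ := chain_rollout D π i hi n hn n le_rfl
    have : (⟨i + n, by clear * - hk; omega⟩ : Fin (D + 2)) = ⟨D, by clear * - hk; omega⟩ := hval.symm.trans hn
    rw [Fin.mk.injEq] at this
    omega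
  have hji : j - i ≤ n := by clear * - hi hj1 hj2 hin; omega
  obtain ⟨hk, hval⟩ := chain_rollout D π i hi n hn (j - i) hji
  have hvj : polIter (chainStep D) π ⟨D, by clear * - hi hj1 hj2; omega⟩ ⟨i, by clear * - hi hj1 hj2; omega⟩ (j - i)
      = ⟨j, by clear * - hj2; omega⟩ := hval.trans (Fin.ext (by clear * - hj1; simp; omega))
  refine ⟨n - (j - i), ?_⟩
  have hsplit : (j - i) + (n - (j - i)) = n := by clear * - hji; omega
  have hshift := polIter_add (chainStep D) π ⟨D, by clear * - hi hj1 hj2; omega⟩ ⟨i, by clear * - hi hj1 hj2; omega⟩ (j - i) (n - (j - i))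
  have hgoal := (congrArg (fun s => polIter (chainStep D) π ⟨D, by clear * - hi hj1 hj2; omega⟩ s (n - (j - i))) hvj).symm
  calc polIter (chainStep D) π ⟨D, by clear * - hi hj1 hj2; omega⟩ ⟨j, by clear * - hi hj1 hj2; omega⟩ (n - (j - i))
      = polIter (chainStep D) π ⟨D, by clear * - hi hj1 hj2; omega⟩
          (polIter (chainStep D) π ⟨D, by clear * - hi hj1 hj2; omega⟩ ⟨i, by clear * - hi hj1 hj2; omega⟩ (j - i)) (n - (j - i)) := hgoal
    _ = polIter (chainStep D) π ⟨D, by clear * - hi hj1 hj2; omega⟩ ⟨i, by clear * - hi hj1 hj2; omega⟩ ((j - i) + (n - (j - i))) :=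
        hshift.symm
    _ = polIter (chainStep D) π ⟨D, by clear * - hi hj1 hj2; omega⟩ ⟨i, by clear * - hi hj1 hj2; omega⟩ n := by rw [hsplit]
    _ = ⟨D, by clear * - hi hj1 hj2; omega⟩ := hn
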